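/- For every nonnegative integer n, ∑_{k=0}^{n} (2k+1)·H_k³ = (n+1)²·H_n³ − (3/2)·n(n+1)·H_n² + ((3n²+3n+1)/2)·H_n − (3/4)·n(n+1). -/

import Mathlib

def harmonic' (n : ℕ) : ℚ := ∑ j ∈ Finset.Icc 1 n, (1 / j : ℚ)

lemma harmonic'_succ (n : ℕ) : harmonic' (n+1) = harmonic' n + 1/(n+1 : ℚ) := by
  unfold harmonic'
  rw [Finset.sum_Icc_succ_top (by omega)]
  push_cast; ring

theorem stmt_9 (n : ℕ) :
    ∑ k ∈ Finset.range (n + 1), (2 * (k : ℚ) + 1) * harmonic' k ^ 3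
      = ((n : ℚ) + 1) ^ 2 * harmonic' n ^ 3 - (3 / 2) * n * (n + 1) * harmonic' n ^ 2
        + ((3 * (n : ℚ) ^ 2 + 3 * n + 1) / 2) * harmonic' n - (3 / 4) * n * (n + 1) := by
  induction n with
  | zero => simp [harmonic']
  | succ n ih =>
    rw [Finset.sum_range_succ, ih, harmonic'_succ]
    have h : ((n : ℚ) + 1) ≠ 0 := by positivity
    push_cast
    field_simp
    ring
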